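/- Let {σ_i}_{i=1}^s be a finite collection of affine transformations of ℝ^d which generate a finite group under composition. Then there exist an integer e ≥ d and a non-degenerate coefficient matrix α ∈ ℝ^{e×d} such that every σ_i is α-compatible. -/

import Mathlib

open Set

/-- A constraint matrix: a pair of vectors of lower and upper bounds in `ℝ^e`. -/
abbrev CM (e : ℕ) := (Fin e → ℝ) × (Fin e → ℝ)

/-- The open polytope `P^α_m` associated with a coefficient matrix `α` and a
constraint matrix `m`. -/
def PolySet {e d : ℕ} (α : Matrix (Fin e) (Fin d) ℝ) (m : CM e) : Set (Fin d → ℝ) :=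
  {x | ∀ i, m.1 i < α.mulVec x i ∧ α.mulVec x i < m.2 i}

/-- A coefficient matrix is non-degenerate if its rows are nonzero and
pairwise non-proportional. -/
def Nondeg {e d : ℕ} (α : Matrix (Fin e) (Fin d) ℝ) : Prop :=
  (∀ i, α i ≠ 0) ∧ ∀ i j : Fin e, i ≠ j → ∀ c : ℝ, α i ≠ c • α j

/-- The set `Λ_i`: vectors `λ ∈ ℝ^e` supported on some `S` with `|S| ≤ d` which are
the unique solution of `λᵀ α = α_i` with support in `S`. -/
def Lambda {e d : ℕ} (α : Matrix (Fin e) (Fin d) ℝ) (i : Fin e) : Set (Fin e → ℝ) :=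
  {l | ∃ S : Finset (Fin e), S.card ≤ d ∧ (∀ k ∉ S, l k = 0) ∧
        (∀ j, ∑ k, l k * α k j = α i j) ∧
        ∀ l' : Fin e → ℝ, (∀ k ∉ S, l' k = 0) → (∀ j, ∑ k, l' k * α k j = α i j) → l' = l}

/-- `e̲_k(a,m)` -/
noncomputable def eLow {e : ℕ} (a : ℝ) (m : CM e) (k : Fin e) : ℝ :=
  if 0 ≤ a then m.1 k else m.2 k

/-- `ē_k(a,m)` -/
noncomputable def eHigh {e : ℕ} (a : ℝ) (m : CM e) (k : Fin e) : ℝ :=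
  if 0 ≤ a then m.2 k else m.1 k

/-- The optimized constraint matrix `O(m)`. -/
noncomputable def Opt {e d : ℕ} (α : Matrix (Fin e) (Fin d) ℝ) (m : CM e) : CM e :=
  (fun i => sSup ((fun l : Fin e → ℝ => ∑ k, l k * eLow (l k) m k) '' Lambda α i),
   fun i => sInf ((fun l : Fin e → ℝ => ∑ k, l k * eHigh (l k) m k) '' Lambda α i))

/-- Intersection constraint matrix `m ∩ m'`. -/
def interCM {e : ℕ} (m m' : CM e) : CM e :=
  (fun i => max (m.1 i) (m'.1 i), fun i => min (m.2 i) (m'.2 i))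

/-- Constraint-matrix inclusion `m ⊂ m'`. -/
def cmSub {e : ℕ} (m m' : CM e) : Prop := ∀ i, m'.1 i ≤ m.1 i ∧ m.2 i ≤ m'.2 i

/-- `σ` is `α`-compatible: there exist a diagonal matrix `A = diag(a)` with nonzero
entries, a coordinate permutation `π` and `B ∈ ℝ^e` with `α(σx) = A π (αx) + B`. -/
def AlphaCompatible {e d : ℕ} (α : Matrix (Fin e) (Fin d) ℝ)
    (σ : (Fin d → ℝ) ≃ᵃ[ℝ] (Fin d → ℝ)) : Prop :=
  ∃ (a : Fin e → ℝ) (π : Equiv.Perm (Fin e)) (B : Fin e → ℝ),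
    (∀ i, a i ≠ 0) ∧
    ∀ (x : Fin d → ℝ) (i : Fin e), α.mulVec (σ x) i = a i * α.mulVec x (π i) + B i

/-- a finite collection of affine transformations of `ℝ^d` generating a
finite group is simultaneously `α`-compatible for some non-degenerate coefficient
matrix `α ∈ ℝ^{e×d}` with `e ≥ d`. -/
theorem statement_5 {d s : ℕ}
    (σ : Fin s → ((Fin d → ℝ) ≃ᵃ[ℝ] (Fin d → ℝ)))
    (hfin : (Subgroup.closure (Set.range σ) :
        Subgroup ((Fin d → ℝ) ≃ᵃ[ℝ] (Fin d → ℝ))).carrier.Finite) :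
    ∃ e : ℕ, d ≤ e ∧ ∃ α : Matrix (Fin e) (Fin d) ℝ,
      Nondeg α ∧ ∀ i, AlphaCompatible α (σ i) := by
  classical
  set G := (Subgroup.closure (Set.range σ) :
      Subgroup ((Fin d → ℝ) ≃ᵃ[ℝ] (Fin d → ℝ))) with hG
  -- matrix of the linear part
  let M : ((Fin d → ℝ) ≃ᵃ[ℝ] (Fin d → ℝ)) → Matrix (Fin d) (Fin d) ℝ :=
    fun g => LinearMap.toMatrix' (g.linear : (Fin d → ℝ) →ₗ[ℝ] (Fin d → ℝ))
  have hM_mulVec : ∀ g (x : Fin d → ℝ), (M g).mulVec x = g.linear x := by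
    intro g x
    have h := Matrix.toLin'_toMatrix' ((g.linear : (Fin d → ℝ) →ₗ[ℝ] (Fin d → ℝ)))
    calc (M g).mulVec x = Matrix.toLin' (M g) x := (Matrix.toLin'_apply _ _).symm
      _ = g.linear x := by rw [h]; rfl
  have hM_mul : ∀ g h, M (g * h) = M g * M h := by
    intro g h
    have : ((g * h).linear : (Fin d → ℝ) →ₗ[ℝ] (Fin d → ℝ)) =
        (g.linear : (Fin d → ℝ) →ₗ[ℝ] _).comp (h.linear : (Fin d → ℝ) →ₗ[ℝ] _) := rfl
    simp only [M, this, LinearMap.toMatrix'_comp]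
  have hM_one : M 1 = 1 := by
    have : ((1 : (Fin d → ℝ) ≃ᵃ[ℝ] (Fin d → ℝ)).linear : (Fin d → ℝ) →ₗ[ℝ] _) =
        LinearMap.id := rfl
    simp only [M, this, LinearMap.toMatrix'_id]
  -- the orbit of the dual standard basis
  let S : Set (Fin d → ℝ) :=
    {r | ∃ g ∈ G, ∃ j : Fin d, r = Matrix.vecMul (Pi.single j 1) (M g)}
  have hS_fin : S.Finite := by
    have : S ⊆ (fun p : ((Fin d → ℝ) ≃ᵃ[ℝ] (Fin d → ℝ)) × Fin d =>
        Matrix.vecMul (Pi.single p.2 1) (M p.1)) '' (G.carrier ×ˢ Set.univ) := by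
      rintro r ⟨g, hg, j, rfl⟩
      exact ⟨(g, j), ⟨hg, trivial⟩, rfl⟩
    exact Set.Finite.subset ((hfin.prod (Set.finite_univ)).image _) this
  have hsingle : ∀ j : Fin d, Pi.single j 1 ∈ S := by
    intro j
    exact ⟨1, one_mem G, j, by rw [hM_one, Matrix.vecMul_one]⟩
  have hS_ne : ∀ r ∈ S, r ≠ 0 := by
    rintro r ⟨g, hg, j, rfl⟩ h0
    have h1 : Matrix.vecMul (Matrix.vecMul (Pi.single j 1) (M g)) (M g⁻¹) =
        Pi.single j 1 := by
      rw [Matrix.vecMul_vecMul, ← hM_mul, mul_inv_cancel, hM_one, Matrix.vecMul_one]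
    rw [h0] at h1
    rw [Matrix.zero_vecMul] at h1
    have h2 := congrFun h1 j
    rw [Pi.single_eq_same] at h2
    exact one_ne_zero h2.symm
  have hS_stable : ∀ r ∈ S, ∀ h ∈ G, Matrix.vecMul r (M h) ∈ S := by
    rintro r ⟨g, hg, j, rfl⟩ h hh
    exact ⟨g * h, mul_mem hg hh, j, by rw [Matrix.vecMul_vecMul, hM_mul]⟩
  -- quotient by proportionality
  haveI : Fintype S := hS_fin.fintype
  let st : Setoid S :=
    { r := fun a b => ∃ c : ℝ, c ≠ 0 ∧ (a : Fin d → ℝ) = c • (b : Fin d → ℝ)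
      iseqv := by
        refine ⟨fun a => ⟨1, one_ne_zero, (one_smul _ _).symm⟩, ?_, ?_⟩
        · rintro a b ⟨c, hc, hab⟩
          exact ⟨c⁻¹, inv_ne_zero hc, by rw [hab, smul_smul, inv_mul_cancel₀ hc, one_smul]⟩
        · rintro a b c ⟨u, hu, hab⟩ ⟨v, hv, hbc⟩
          exact ⟨u * v, mul_ne_zero hu hv, by rw [hab, hbc, smul_smul]⟩ }
  let Q := Quotient st
  let e := Fintype.card Q
  have hde : d ≤ e := by
    have hinj : Function.Injective
        (fun j : Fin d => (⟦⟨Pi.single j 1, hsingle j⟩⟧ : Q)) := by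
      intro j k hjk
      obtain ⟨c, hc, hck⟩ := Quotient.exact hjk
      by_contra hne
      have h5 : (Pi.single j 1 : Fin d → ℝ) j = (c • (Pi.single k 1 : Fin d → ℝ)) j := congrFun hck j
      rw [Pi.smul_apply, Pi.single_eq_same, Pi.single_eq_of_ne hne, smul_zero] at h5
      exact one_ne_zero h5
    simpa [e] using Fintype.card_le_of_injective _ hinj
  let eqv : Fin e ≃ Q := (Fintype.equivFin Q).symm
  let row : Fin e → (Fin d → ℝ) := fun t => ((eqv t).out : Fin d → ℝ)
  have hrowS : ∀ t, row t ∈ S := fun t => ((eqv t).out).2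
  -- rows are pairwise non-proportional
  have keyA : ∀ t t' : Fin e, ∀ c : ℝ, c ≠ 0 → row t = c • row t' → t = t' := by
    intro t t' c hc h
    have : (eqv t).out ≈ (eqv t').out := ⟨c, hc, h⟩
    have h2 : eqv t = eqv t' := by
      rw [← Quotient.out_eq (eqv t), ← Quotient.out_eq (eqv t')]
      exact Quotient.sound this
    exact eqv.injective h2
  refine ⟨e, hde, Matrix.of row, ⟨fun t => hS_ne _ (hrowS t), ?_⟩, ?_⟩
  · intro t t' htt' c hceq
    rcases eq_or_ne c 0 with rfl | hc
    · exact hS_ne _ (hrowS t) (hceq.trans (zero_smul ℝ _))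
    · exact htt' (keyA t t' c hc hceq)
  -- compatibility of each generator
  intro i
  have hσG : σ i ∈ G := Subgroup.subset_closure ⟨i, rfl⟩
  let y : Fin e → (Fin d → ℝ) := fun t => Matrix.vecMul (row t) (M (σ i))
  have hyS : ∀ t, y t ∈ S := fun t => hS_stable _ (hrowS t) _ hσG
  let q : Fin e → Q := fun t => ⟦⟨y t, hyS t⟩⟧
  have hout : ∀ t, ∃ c : ℝ, c ≠ 0 ∧ ((q t).out : Fin d → ℝ) = c • y t := by
    intro t
    exact Quotient.exact (Quotient.out_eq (q t))
  choose c hc hcy using hout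
  let π₀ : Fin e → Fin e := fun t => eqv.symm (q t)
  have hrowπ : ∀ t, row (π₀ t) = c t • y t := by
    intro t
    simpa [row, π₀, Equiv.apply_symm_apply] using hcy t
  have hy : ∀ t, y t = (c t)⁻¹ • row (π₀ t) := by
    intro t
    rw [hrowπ t, smul_smul, inv_mul_cancel₀ (hc t), one_smul]
  have hπinj : Function.Injective π₀ := by
    intro t t' htt'
    have h1 : c t • y t = c t' • y t' := by
      rw [← hrowπ t, ← hrowπ t', htt']
    have h2 : y t = ((c t)⁻¹ * c t') • y t' := by
      rw [mul_smul, ← h1, smul_smul, inv_mul_cancel₀ (hc t), one_smul]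
    have h3 : Matrix.vecMul (row t) (M (σ i)) =
        Matrix.vecMul (((c t)⁻¹ * c t') • row t') (M (σ i)) := by
      rw [Matrix.smul_vecMul]; exact h2
    have h4 : row t = ((c t)⁻¹ * c t') • row t' := by
      have := congrArg (fun v => Matrix.vecMul v (M (σ i)⁻¹)) h3
      simpa [Matrix.vecMul_vecMul, ← hM_mul, mul_inv_cancel, hM_one,
        Matrix.vecMul_one] using this
    exact keyA t t' _ (mul_ne_zero (inv_ne_zero (hc t)) (hc t')) h4
  refine ⟨fun t => (c t)⁻¹, Equiv.ofBijective π₀ (Finite.injective_iff_bijective.mp hπinj),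
    fun t => dotProduct (row t) (σ i 0), fun t => inv_ne_zero (hc t), ?_⟩
  intro x t
  have hdecomp : σ i x = (σ i).linear x + (σ i) 0 := by
    simpa [vadd_eq_add] using (σ i).map_vadd (0 : Fin d → ℝ) x
  have hml : ∀ (u : Fin e) (v : Fin d → ℝ), (Matrix.of row).mulVec v u = dotProduct (row u) v := fun _ _ => rfl
  rw [hml, hdecomp, dotProduct_add, ← hM_mulVec (σ i) x,
    Matrix.dotProduct_mulVec]
  have : Matrix.vecMul (row t) (M (σ i)) = (c t)⁻¹ • row (π₀ t) := hy t
  rw [this, smul_dotProduct]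
  simp only [Equiv.ofBijective_apply, hml, smul_eq_mul]
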